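/- arXiv:2003.08063 — 2 statements merged into one kernel-verified Lean document; each statement's English description precedes it below -/
import Mathlib

section
/- Let f : ℝⁿ × ℝᵐ → ℝⁿ be C¹ and let x(s, w) solve ẋ = f(x, w), x(0) = x₀ (independent of w), with x C¹ in (s, w). Let ℓ(w) = g(x(S, w)) for g ∈ C¹. If λ : [0,S] → ℝⁿ solves the adjoint equation λ̇ᵀ = -λᵀ ∂f/∂x(x(s,w), w) backward from λ(S)ᵀ = ∂g/∂x(x(S,w)), then dℓ/dw = ∫₀^S λ(τ)ᵀ ∂f/∂w (x(τ,w), w) dτ. -/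
open scoped RealInnerProductSpace
open MeasureTheory Metric

theorem stmt_10 {n m : ℕ}
    (f : EuclideanSpace ℝ (Fin n) → EuclideanSpace ℝ (Fin m) → EuclideanSpace ℝ (Fin n))
    (hf : ContDiff ℝ 1 fun p : EuclideanSpace ℝ (Fin n) × EuclideanSpace ℝ (Fin m) => f p.1 p.2)
    (x : ℝ → EuclideanSpace ℝ (Fin m) → EuclideanSpace ℝ (Fin n))
    (x₀ : EuclideanSpace ℝ (Fin n)) (hx0 : ∀ w, x 0 w = x₀)
    (hx : ContDiff ℝ 1 fun p : ℝ × EuclideanSpace ℝ (Fin m) => x p.1 p.2)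
    (hsol : ∀ (s : ℝ) (w : EuclideanSpace ℝ (Fin m)), HasDerivAt (fun t => x t w) (f (x s w) w) s)
    (g : EuclideanSpace ℝ (Fin n) → ℝ) (hg : ContDiff ℝ 1 g)
    (S : ℝ) (hS : 0 < S) (w₀ : EuclideanSpace ℝ (Fin m))
    (l dl : ℝ → EuclideanSpace ℝ (Fin n))
    (hl : ∀ s : ℝ, HasDerivAt l (dl s) s)
    (hadj : ∀ (s : ℝ) (v : EuclideanSpace ℝ (Fin n)),
      ⟪dl s, v⟫ = -⟪l s, fderiv ℝ (fun y => f y w₀) (x s w₀) v⟫)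
    (hterm : ∀ v : EuclideanSpace ℝ (Fin n), ⟪l S, v⟫ = fderiv ℝ g (x S w₀) v) :
    ∀ v : EuclideanSpace ℝ (Fin m),
      fderiv ℝ (fun w => g (x S w)) w₀ v =
        ∫ τ in (0:ℝ)..S, ⟪l τ, fderiv ℝ (fun w => f (x τ w₀) w) w₀ v⟫ := by
  intro v
  have hfd : Differentiable ℝ (fun p : EuclideanSpace ℝ (Fin n) × EuclideanSpace ℝ (Fin m) =>
      f p.1 p.2) := hf.differentiable one_ne_zero
  have hxd : Differentiable ℝ (fun p : ℝ × EuclideanSpace ℝ (Fin m) => x p.1 p.2) :=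
    hx.differentiable one_ne_zero
  set G : ℝ × EuclideanSpace ℝ (Fin m) → EuclideanSpace ℝ (Fin n) :=
    fun p => f (x p.1 p.2) p.2 with hGdef
  have hGc : ContDiff ℝ 1 G := hf.comp (hx.prodMk contDiff_snd)
  have hGd : Differentiable ℝ G := hGc.differentiable one_ne_zero
  have hGcont : Continuous G := hGc.continuous
  have hG_fc : Continuous (fun p => fderiv ℝ G p) := hGc.continuous_fderiv one_ne_zero
  have hf_fc : Continuous (fun p => fderiv ℝ
      (fun q : EuclideanSpace ℝ (Fin n) × EuclideanSpace ℝ (Fin m) => f q.1 q.2) p) :=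
    hf.continuous_fderiv one_ne_zero
  set Φ : ℝ → EuclideanSpace ℝ (Fin m) →L[ℝ] EuclideanSpace ℝ (Fin n) :=
    fun t => (fderiv ℝ G (t, w₀)).comp
      (ContinuousLinearMap.inr ℝ ℝ (EuclideanSpace ℝ (Fin m))) with hΦdef
  set ψ : ℝ → EuclideanSpace ℝ (Fin n) := fun t => Φ t v with hψdef
  set u : ℝ → EuclideanSpace ℝ (Fin n) := fun s => ∫ t in (0:ℝ)..s, ψ t with hudef
  have hΦc : Continuous Φ :=
    ((ContinuousLinearMap.compL ℝ (EuclideanSpace ℝ (Fin m))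
        (ℝ × EuclideanSpace ℝ (Fin m)) (EuclideanSpace ℝ (Fin n))).continuous.comp
      (hG_fc.comp (continuous_id.prodMk continuous_const))).clm_apply continuous_const
  have hψc : Continuous ψ := hΦc.clm_apply continuous_const
  -- the key variational derivative
  have key : ∀ s : ℝ, HasFDerivAt (fun w => x s w) (∫ t in (0:ℝ)..s, Φ t) w₀ := by
    intro s
    have hxeq : (fun w => x s w) = fun w => (∫ t in (0:ℝ)..s, G (t, w)) + x₀ := by
      funext w
      have h1 : ∫ t in (0:ℝ)..s, G (t, w) = x s w - x 0 w :=
        intervalIntegral.integral_eq_sub_of_hasDerivAt (fun t _ => hsol t w)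
          ((hGcont.comp (continuous_id.prodMk continuous_const)).intervalIntegrable 0 s)
      rw [h1, hx0 w]
      abel
    have hbdd : ∃ M : ℝ, ∀ p ∈ (Set.uIcc (0:ℝ) s) ×ˢ closedBall w₀ 1,
        ‖(fderiv ℝ G p).comp (ContinuousLinearMap.inr ℝ ℝ (EuclideanSpace ℝ (Fin m)))‖ ≤ M := by
      apply (isCompact_uIcc.prod (isCompact_closedBall w₀ 1)).exists_bound_of_continuousOn
      exact ((ContinuousLinearMap.compL ℝ (EuclideanSpace ℝ (Fin m))
        (ℝ × EuclideanSpace ℝ (Fin m)) (EuclideanSpace ℝ (Fin n))).continuous.comp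
        hG_fc).clm_apply continuous_const |>.continuousOn
    obtain ⟨M, hM⟩ := hbdd
    have main : HasFDerivAt (fun w => ∫ t in (0:ℝ)..s, G (t, w)) (∫ t in (0:ℝ)..s, Φ t) w₀ := by
      apply intervalIntegral.hasFDerivAt_integral_of_dominated_of_fderiv_le
        (F := fun w t => G (t, w))
        (F' := fun w t => (fderiv ℝ G (t, w)).comp
          (ContinuousLinearMap.inr ℝ ℝ (EuclideanSpace ℝ (Fin m))))
        (bound := fun _ => M) (ball_mem_nhds w₀ one_pos)
      · exact Filter.Eventually.of_forall fun w =>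
          ((hGcont.comp (continuous_id.prodMk continuous_const)).aestronglyMeasurable)
      · exact (hGcont.comp (continuous_id.prodMk continuous_const)).intervalIntegrable 0 s
      · exact hΦc.aestronglyMeasurable
      · exact Filter.Eventually.of_forall fun t ht w hw =>
          hM (t, w) ⟨Set.uIoc_subset_uIcc ht, ball_subset_closedBall hw⟩
      · exact intervalIntegrable_const
      · exact Filter.Eventually.of_forall fun t ht w hw =>
          ((hGd (t, w)).hasFDerivAt.comp w (hasFDerivAt_prodMk_right t w))
    rw [hxeq]
    exact main.add_const x₀
  have hΦint : ∀ s : ℝ, IntervalIntegrable Φ volume 0 s := fun s => hΦc.intervalIntegrable 0 s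
  have hIv : ∀ s : ℝ, (∫ t in (0:ℝ)..s, Φ t) v = u s := fun s =>
    ContinuousLinearMap.intervalIntegral_apply (hΦint s) v
  have hu' : ∀ s : ℝ, HasDerivAt u (ψ s) s := fun s =>
    (hψc.integral_hasStrictDerivAt 0 s).hasDerivAt
  have hq : ∀ (s : ℝ) (z : EuclideanSpace ℝ (Fin n)),
      fderiv ℝ (fun y => f y w₀) (x s w₀) z
        = fderiv ℝ (fun p : EuclideanSpace ℝ (Fin n) × EuclideanSpace ℝ (Fin m) => f p.1 p.2)
            (x s w₀, w₀) (z, 0) := by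
    intro s z
    have h : HasFDerivAt (fun y => f y w₀)
        ((fderiv ℝ (fun p : EuclideanSpace ℝ (Fin n) × EuclideanSpace ℝ (Fin m) => f p.1 p.2)
          (x s w₀, w₀)).comp
            (ContinuousLinearMap.inl ℝ (EuclideanSpace ℝ (Fin n)) (EuclideanSpace ℝ (Fin m))))
        (x s w₀) :=
      by have := (hfd (x s w₀, w₀)).hasFDerivAt.comp (x s w₀) (hasFDerivAt_prodMk_left (𝕜 := ℝ) (x s w₀) w₀); exact this
    rw [h.fderiv]
    rfl
  have hqr : ∀ s : ℝ,
      fderiv ℝ (fun w => f (x s w₀) w) w₀ v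
        = fderiv ℝ (fun p : EuclideanSpace ℝ (Fin n) × EuclideanSpace ℝ (Fin m) => f p.1 p.2)
            (x s w₀, w₀) (0, v) := by
    intro s
    have h : HasFDerivAt (fun w => f (x s w₀) w)
        ((fderiv ℝ (fun p : EuclideanSpace ℝ (Fin n) × EuclideanSpace ℝ (Fin m) => f p.1 p.2)
          (x s w₀, w₀)).comp
            (ContinuousLinearMap.inr ℝ (EuclideanSpace ℝ (Fin n)) (EuclideanSpace ℝ (Fin m))))
        w₀ :=
      (hfd (x s w₀, w₀)).hasFDerivAt.comp w₀ (hasFDerivAt_prodMk_right (x s w₀) w₀)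
    rw [h.fderiv]
    rfl
  have hψeq : ∀ s : ℝ, ψ s
      = fderiv ℝ (fun p : EuclideanSpace ℝ (Fin n) × EuclideanSpace ℝ (Fin m) => f p.1 p.2)
          (x s w₀, w₀) (u s, v) := by
    intro s
    have h1 : HasFDerivAt (fun w => f (x s w) w) (Φ s) w₀ :=
      (hGd (s, w₀)).hasFDerivAt.comp w₀ (hasFDerivAt_prodMk_right s w₀)
    have h2 : HasFDerivAt (fun w => f (x s w) w)
        ((fderiv ℝ (fun p : EuclideanSpace ℝ (Fin n) × EuclideanSpace ℝ (Fin m) => f p.1 p.2)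
          (x s w₀, w₀)).comp
            ((∫ t in (0:ℝ)..s, Φ t).prod
              (ContinuousLinearMap.id ℝ (EuclideanSpace ℝ (Fin m))))) w₀ := by
      have hpair : HasFDerivAt (fun w => ((x s w, w) :
            EuclideanSpace ℝ (Fin n) × EuclideanSpace ℝ (Fin m)))
          ((∫ t in (0:ℝ)..s, Φ t).prod (ContinuousLinearMap.id ℝ (EuclideanSpace ℝ (Fin m)))) w₀ :=
        HasFDerivAt.prodMk (key s) (hasFDerivAt_id w₀)
      exact HasFDerivAt.comp w₀ ((hfd _).hasFDerivAt) hpair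
    have h3 := h1.unique h2
    calc ψ s = Φ s v := rfl
      _ = _ := by
          rw [h3]
          simp [ContinuousLinearMap.comp_apply, ContinuousLinearMap.prod_apply, hIv s]
  have hder : ∀ s : ℝ, HasDerivAt (fun t => ⟪l t, u t⟫)
      (⟪l s, fderiv ℝ (fun w => f (x s w₀) w) w₀ v⟫) s := by
    intro s
    have h := (hl s).inner ℝ (hu' s)
    convert h using 1
    iterate 2 rfl
    rw [hψeq s, hadj s (u s), hq s (u s), hqr s]
    have hsplit : fderiv ℝ
        (fun p : EuclideanSpace ℝ (Fin n) × EuclideanSpace ℝ (Fin m) => f p.1 p.2)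
          (x s w₀, w₀) (u s, v)
        = fderiv ℝ (fun p : EuclideanSpace ℝ (Fin n) × EuclideanSpace ℝ (Fin m) => f p.1 p.2)
            (x s w₀, w₀) (u s, 0)
          + fderiv ℝ (fun p : EuclideanSpace ℝ (Fin n) × EuclideanSpace ℝ (Fin m) => f p.1 p.2)
              (x s w₀, w₀) (0, v) := by
      rw [← ContinuousLinearMap.map_add]
      norm_num
    rw [hsplit, inner_add_right]
    ring
  have hlc : Continuous l := continuous_iff_continuousAt.2 fun s => (hl s).continuousAt
  have hxc : Continuous fun τ : ℝ => x τ w₀ :=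
    hx.continuous.comp (continuous_id.prodMk continuous_const)
  have hecont : Continuous fun τ => ⟪l τ, fderiv ℝ (fun w => f (x τ w₀) w) w₀ v⟫ := by
    have heq : (fun τ => ⟪l τ, fderiv ℝ (fun w => f (x τ w₀) w) w₀ v⟫)
        = fun τ => ⟪l τ, fderiv ℝ
            (fun p : EuclideanSpace ℝ (Fin n) × EuclideanSpace ℝ (Fin m) => f p.1 p.2)
              (x τ w₀, w₀) ((0 : EuclideanSpace ℝ (Fin n)), v)⟫ := by
      funext τ
      rw [hqr τ]
    rw [heq]
    exact hlc.inner ((hf_fc.comp (hxc.prodMk continuous_const)).clm_apply continuous_const)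
  have hFTC : ∫ τ in (0:ℝ)..S, ⟪l τ, fderiv ℝ (fun w => f (x τ w₀) w) w₀ v⟫
      = ⟪l S, u S⟫ - ⟪l 0, u 0⟫ :=
    intervalIntegral.integral_eq_sub_of_hasDerivAt (fun τ _ => hder τ)
      (hecont.intervalIntegrable 0 S)
  have hu0 : u 0 = 0 := intervalIntegral.integral_same
  have hfin : fderiv ℝ (fun w => g (x S w)) w₀ v = fderiv ℝ g (x S w₀) (u S) := by
    have h : HasFDerivAt (fun w => g (x S w))
        ((fderiv ℝ g (x S w₀)).comp (∫ t in (0:ℝ)..S, Φ t)) w₀ :=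
      ((hg.differentiable one_ne_zero) (x S w₀)).hasFDerivAt.comp w₀ (key S)
    rw [h.fderiv]
    simp [ContinuousLinearMap.comp_apply, hIv S]
  rw [hFTC, hu0, inner_zero_right, sub_zero, hfin, ← hterm (u S)]
end

section
/- Under the same smoothness assumptions, for the integral (back-propagated) cost ℓ(w) = ∫₀^S g(x(τ, w)) dτ, if λ solves λ̇ᵀ = -λᵀ ∂f/∂x - ∂g/∂x backward from λ(S) = 0, then dℓ/dw = ∫₀^S λ(τ)ᵀ ∂f/∂w dτ. -/
open scoped RealInnerProductSpace
open ContinuousLinearMap Metric MeasureTheory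

set_option maxHeartbeats 1000000 in
theorem stmt_11 {n m : ℕ}
    (f : EuclideanSpace ℝ (Fin n) → EuclideanSpace ℝ (Fin m) → EuclideanSpace ℝ (Fin n))
    (hf : ContDiff ℝ 1 fun p : EuclideanSpace ℝ (Fin n) × EuclideanSpace ℝ (Fin m) => f p.1 p.2)
    (x : ℝ → EuclideanSpace ℝ (Fin m) → EuclideanSpace ℝ (Fin n))
    (x₀ : EuclideanSpace ℝ (Fin n)) (hx0 : ∀ w, x 0 w = x₀)
    (hx : ContDiff ℝ 1 fun p : ℝ × EuclideanSpace ℝ (Fin m) => x p.1 p.2)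
    (hsol : ∀ (s : ℝ) (w : EuclideanSpace ℝ (Fin m)), HasDerivAt (fun t => x t w) (f (x s w) w) s)
    (g : EuclideanSpace ℝ (Fin n) → ℝ) (hg : ContDiff ℝ 1 g)
    (S : ℝ) (hS : 0 < S) (w₀ : EuclideanSpace ℝ (Fin m))
    (l dl : ℝ → EuclideanSpace ℝ (Fin n))
    (hl : ∀ s : ℝ, HasDerivAt l (dl s) s)
    (hadj : ∀ (s : ℝ) (v : EuclideanSpace ℝ (Fin n)),
      ⟪dl s, v⟫ = -⟪l s, fderiv ℝ (fun y => f y w₀) (x s w₀) v⟫ - fderiv ℝ g (x s w₀) v)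
    (hterm : l S = 0) :
    ∀ v : EuclideanSpace ℝ (Fin m),
      fderiv ℝ (fun w => ∫ τ in (0:ℝ)..S, g (x τ w)) w₀ v =
        ∫ τ in (0:ℝ)..S, ⟪l τ, fderiv ℝ (fun w => f (x τ w₀) w) w₀ v⟫ := by
  set X : ℝ × EuclideanSpace ℝ (Fin m) → EuclideanSpace ℝ (Fin n) := fun p => x p.1 p.2 with hXdef
  set Ff : EuclideanSpace ℝ (Fin n) × EuclideanSpace ℝ (Fin m) → EuclideanSpace ℝ (Fin n) :=
    fun p => f p.1 p.2 with hFfdef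
  have hXc : Continuous X := hx.continuous
  have hXf : Continuous (fderiv ℝ X) := hx.continuous_fderiv one_ne_zero
  have hFff : Continuous (fderiv ℝ Ff) := hf.continuous_fderiv one_ne_zero
  have hgf : Continuous (fderiv ℝ g) := hg.continuous_fderiv one_ne_zero
  have hlc : Continuous l := by
    rw [continuous_iff_continuousAt]; exact fun s => (hl s).continuousAt
  -- partial derivative of x in w
  set P : ℝ → EuclideanSpace ℝ (Fin m) →
      (EuclideanSpace ℝ (Fin m) →L[ℝ] EuclideanSpace ℝ (Fin n)) :=
    fun τ w => (fderiv ℝ X (τ, w)).comp (ContinuousLinearMap.inr ℝ ℝ _) with hPdef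
  have hPd : ∀ τ w, HasFDerivAt (fun w' => x τ w') (P τ w) w := fun τ w =>
    ((hx.differentiable one_ne_zero (τ, w)).hasFDerivAt).comp w (hasFDerivAt_prodMk_right τ w)
  have hPc : Continuous fun p : ℝ × EuclideanSpace ℝ (Fin m) => P p.1 p.2 :=
    hXf.clm_comp continuous_const
  -- continuity of s ↦ x s w₀
  have hxw₀ : Continuous fun s : ℝ => x s w₀ :=
    hXc.comp (continuous_id.prodMk continuous_const)
  -- identify dl as a continuous function
  have hApart : ∀ s : ℝ, fderiv ℝ (fun y => f y w₀) (x s w₀)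
      = (fderiv ℝ Ff (x s w₀, w₀)).comp (ContinuousLinearMap.inl ℝ _ _) := fun s =>
    HasFDerivAt.fderiv (((hf.differentiable one_ne_zero _).hasFDerivAt).comp _
      (hasFDerivAt_prodMk_left (x s w₀) w₀))
  have hdlc : Continuous dl := by
    have hq : ∀ s : ℝ, dl s = -(ContinuousLinearMap.adjoint
          ((fderiv ℝ Ff (x s w₀, w₀)).comp (ContinuousLinearMap.inl ℝ _ _))) (l s)
        - (InnerProductSpace.toDual ℝ _).symm (fderiv ℝ g (x s w₀)) := by
      intro s
      apply ext_inner_right ℝ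
      intro v
      rw [hadj s v, hApart s]
      simp [inner_sub_left, inner_neg_left, ContinuousLinearMap.adjoint_inner_left,
        InnerProductSpace.toDual_symm_apply]
    rw [funext hq]
    apply Continuous.sub
    · exact ((ContinuousLinearMap.adjoint.toLinearIsometry.continuous.comp
        ((hFff.comp (hxw₀.prodMk continuous_const)).clm_comp continuous_const)).clm_apply hlc).neg
    · exact (InnerProductSpace.toDual ℝ _).symm.continuous.comp (hgf.comp hxw₀)
  -- the modified integrand
  set Φ : ℝ → EuclideanSpace ℝ (Fin m) → ℝ :=
    fun τ w => g (x τ w) + ⟪l τ, f (x τ w) w⟫ + ⟪dl τ, x τ w⟫ with hΦdef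
  set H : ℝ → EuclideanSpace ℝ (Fin m) → (EuclideanSpace ℝ (Fin m) →L[ℝ] ℝ) := fun τ w =>
    (fderiv ℝ g (x τ w)).comp (P τ w)
      + (innerSL ℝ (l τ)).comp ((fderiv ℝ Ff (x τ w, w)).comp
          ((P τ w).prod (ContinuousLinearMap.id ℝ _)))
      + (innerSL ℝ (dl τ)).comp (P τ w) with hHdef
  have hfd : ∀ τ w, HasFDerivAt (fun w' => f (x τ w') w')
      ((fderiv ℝ Ff (x τ w, w)).comp ((P τ w).prod (ContinuousLinearMap.id ℝ _))) w := by
    intro τ w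
    have hFfd : HasFDerivAt Ff (fderiv ℝ Ff (x τ w, w)) (x τ w, w) :=
      (hf.differentiable one_ne_zero (x τ w, w)).hasFDerivAt
    have hpair : HasFDerivAt
        (fun w' => ((x τ w', w') : EuclideanSpace ℝ (Fin n) × EuclideanSpace ℝ (Fin m)))
        ((P τ w).prod (ContinuousLinearMap.id ℝ _)) w := (hPd τ w).prodMk (hasFDerivAt_id w)
    exact HasFDerivAt.comp (f := fun w' => (x τ w', w')) w hFfd hpair
  have hHd : ∀ τ w, HasFDerivAt (fun w' => Φ τ w') (H τ w) w := by
    intro τ w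
    have h1 : HasFDerivAt (fun w' => g (x τ w')) ((fderiv ℝ g (x τ w)).comp (P τ w)) w :=
      ((hg.differentiable one_ne_zero _).hasFDerivAt).comp w (hPd τ w)
    have h2 : HasFDerivAt (fun w' => ⟪l τ, f (x τ w') w'⟫)
        ((innerSL ℝ (l τ)).comp ((fderiv ℝ Ff (x τ w, w)).comp
          ((P τ w).prod (ContinuousLinearMap.id ℝ _)))) w :=
      ((innerSL ℝ (l τ)).hasFDerivAt).comp w (hfd τ w)
    have h3 : HasFDerivAt (fun w' => ⟪dl τ, x τ w'⟫) ((innerSL ℝ (dl τ)).comp (P τ w)) w :=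
      ((innerSL ℝ (dl τ)).hasFDerivAt).comp w (hPd τ w)
    exact (h1.add h2).add h3
  have hprodid : ∀ τ w, (P τ w).prod (ContinuousLinearMap.id ℝ _)
      = (ContinuousLinearMap.inl ℝ _ _).comp (P τ w)
        + ContinuousLinearMap.inr ℝ _ _ := by
    intro τ w; ext v <;> simp
  have hHc : Continuous fun p : ℝ × EuclideanSpace ℝ (Fin m) => H p.1 p.2 := by
    simp only [hHdef, hprodid]
    refine Continuous.add (Continuous.add ?_ ?_) ?_
    · exact (hgf.comp hXc).clm_comp hPc
    · exact ((innerSL ℝ).continuous.comp (hlc.comp continuous_fst)).clm_comp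
        ((hFff.comp (hXc.prodMk continuous_snd)).clm_comp
          ((continuous_const.clm_comp hPc).add continuous_const))
    · exact ((innerSL ℝ).continuous.comp (hdlc.comp continuous_fst)).clm_comp hPc
  obtain ⟨C, hC⟩ : ∃ C, ∀ p ∈ (Set.uIcc (0:ℝ) S) ×ˢ closedBall w₀ 1, ‖H p.1 p.2‖ ≤ C :=
    (isCompact_uIcc.prod (isCompact_closedBall w₀ 1)).exists_bound_of_continuousOn
      hHc.continuousOn
  have hΦcont : ∀ w, Continuous fun τ => Φ τ w := by
    intro w
    have hxw : Continuous fun τ => x τ w := hXc.comp (continuous_id.prodMk continuous_const)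
    exact ((hg.continuous.comp hxw).add
      (hlc.inner (hf.continuous.comp (hxw.prodMk continuous_const)))).add (hdlc.inner hxw)
  have hmain : HasFDerivAt (fun w => ∫ τ in (0:ℝ)..S, Φ τ w)
      (∫ τ in (0:ℝ)..S, H τ w₀) w₀ := by
    apply intervalIntegral.hasFDerivAt_integral_of_dominated_of_fderiv_le
      (F' := fun w τ => H τ w) (bound := fun _ => C) (ball_mem_nhds w₀ one_pos)
    · exact Filter.Eventually.of_forall fun w => (hΦcont w).aestronglyMeasurable
    · exact (hΦcont w₀).intervalIntegrable 0 S
    · exact (hHc.comp (continuous_id.prodMk continuous_const)).aestronglyMeasurable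
    · exact MeasureTheory.ae_of_all _ fun t ht w hw =>
        hC (t, w) ⟨Set.uIoc_subset_uIcc ht, ball_subset_closedBall hw⟩
    · exact intervalIntegrable_const
    · exact MeasureTheory.ae_of_all _ fun t ht w hw => hHd t w
  have key : ∀ w, (∫ τ in (0:ℝ)..S, Φ τ w)
      = (∫ τ in (0:ℝ)..S, g (x τ w)) - ⟪l 0, x₀⟫ := by
    intro w
    have hxw : Continuous fun τ => x τ w := hXc.comp (continuous_id.prodMk continuous_const)
    have hderiv : ∀ t ∈ Set.uIcc (0:ℝ) S, HasDerivAt (fun τ => ⟪l τ, x τ w⟫)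
        (⟪l t, f (x t w) w⟫ + ⟪dl t, x t w⟫) t := fun t _ => (hl t).inner ℝ (hsol t w)
    have hint : IntervalIntegrable (fun t => ⟪l t, f (x t w) w⟫ + ⟪dl t, x t w⟫) volume 0 S :=
      ((hlc.inner (hf.continuous.comp (hxw.prodMk continuous_const))).add
        (hdlc.inner hxw)).intervalIntegrable 0 S
    have hftc := intervalIntegral.integral_eq_sub_of_hasDerivAt hderiv hint
    rw [hterm, hx0 w] at hftc
    simp only [inner_zero_left] at hftc
    have hsplit : (∫ τ in (0:ℝ)..S, Φ τ w) = (∫ τ in (0:ℝ)..S, g (x τ w))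
        + ∫ τ in (0:ℝ)..S, (⟪l τ, f (x τ w) w⟫ + ⟪dl τ, x τ w⟫) := by
      have hgint : IntervalIntegrable (fun τ => g (x τ w)) volume 0 S :=
        (hg.continuous.comp hxw).intervalIntegrable 0 S
      rw [← intervalIntegral.integral_add hgint hint]
      apply intervalIntegral.integral_congr
      intro t _
      simp only [hΦdef]; ring
    rw [hsplit, hftc]; ring
  have hmain2 : HasFDerivAt (fun w => ∫ τ in (0:ℝ)..S, g (x τ w))
      (∫ τ in (0:ℝ)..S, H τ w₀) w₀ := by
    have heq : (fun w => ∫ τ in (0:ℝ)..S, g (x τ w))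
        = fun w => (∫ τ in (0:ℝ)..S, Φ τ w) + ⟪l 0, x₀⟫ := by
      funext w; rw [key w]; ring
    rw [heq]
    exact hmain.add_const _
  intro v
  rw [hmain2.fderiv]
  have hHw₀ : Continuous fun τ => H τ w₀ :=
    hHc.comp (continuous_id.prodMk continuous_const)
  rw [ContinuousLinearMap.intervalIntegral_apply (hHw₀.intervalIntegrable 0 S)]
  apply intervalIntegral.integral_congr
  intro t _
  have hBpart : fderiv ℝ (fun w => f (x t w₀) w) w₀
      = (fderiv ℝ Ff (x t w₀, w₀)).comp (ContinuousLinearMap.inr ℝ _ _) :=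
    HasFDerivAt.fderiv (((hf.differentiable one_ne_zero _).hasFDerivAt).comp _
      (hasFDerivAt_prodMk_right (x t w₀) w₀))
  have hsplitF : (fderiv ℝ Ff (x t w₀, w₀)) (P t w₀ v, v)
      = (fderiv ℝ Ff (x t w₀, w₀)) (P t w₀ v, 0)
        + (fderiv ℝ Ff (x t w₀, w₀)) (0, v) := by
    rw [← ContinuousLinearMap.map_add]
    norm_num
  have hadj' := hadj t (P t w₀ v)
  rw [hApart t] at hadj'
  simp only [hHdef, hBpart, ContinuousLinearMap.add_apply, ContinuousLinearMap.comp_apply,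
    ContinuousLinearMap.prod_apply, ContinuousLinearMap.id_apply, ContinuousLinearMap.inl_apply,
    ContinuousLinearMap.inr_apply, innerSL_apply_apply] at hadj' ⊢
  rw [hsplitF, inner_add_right, hadj']
  ring
end
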